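/- For every symmetric tensor T in Sym^d(ℝⁿ), ‖T‖_∞ ≥ 2^(-d/2)·C(d+n-1,d)^(-1/2)·‖T‖, where ‖T‖_∞ is the real spectral norm and ‖T‖ the Frobenius norm. -/

import Mathlib

open MeasureTheory Polynomial Real Filter Finset



noncomputable def gw (x : ℝ) : ℝ := (Real.sqrt (2 * Real.pi))⁻¹ * Real.exp (-x ^ 2 / 2)

lemma gw_nonneg (x : ℝ) : 0 ≤ gw x := by
  unfold gw
  positivity

lemma gw_cont : Continuous gw := by
  unfold gw
  fun_prop

lemma integrable_pow_gw (k : ℕ) : Integrable (fun x : ℝ => x ^ k * gw x) := by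
  have h : Integrable (fun x : ℝ => x ^ k * Real.exp (-(1/2) * x ^ 2)) := by
    have := integrable_rpow_mul_exp_neg_mul_sq (b := 1/2) (by norm_num) (s := (k : ℝ))
      (lt_of_lt_of_le (by norm_num) (Nat.cast_nonneg k))
    simpa [Real.rpow_natCast] using this
  have h2 := h.const_mul ((Real.sqrt (2 * Real.pi))⁻¹)
  apply h2.congr
  filter_upwards with x
  unfold gw
  ring_nf

lemma integrable_poly_gw (P : ℝ[X]) : Integrable (fun x : ℝ => P.eval x * gw x) := by
  have : (fun x : ℝ => P.eval x * gw x)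
      = fun x => ∑ i ∈ Finset.range (P.natDegree + 1), P.coeff i * (x ^ i * gw x) := by
    funext x
    rw [Polynomial.eval_eq_sum_range, Finset.sum_mul]
    simp [mul_assoc]
  rw [this]
  exact integrable_finset_sum _ (fun i _ => (integrable_pow_gw i).const_mul _)

noncomputable def gi (P : ℝ[X]) : ℝ := ∫ x : ℝ, P.eval x * gw x

lemma gi_one : gi 1 = 1 := by
  unfold gi gw
  simp only [Polynomial.eval_one, one_mul]
  rw [MeasureTheory.integral_const_mul]
  have : ∀ x : ℝ, Real.exp (-x ^ 2 / 2) = Real.exp (-(1/2) * x ^ 2) := by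
    intro x; ring_nf
  simp_rw [this]
  rw [integral_gaussian]
  rw [inv_mul_eq_div, div_eq_one_iff_eq (by positivity)]
  norm_num
  ring


lemma tendsto_poly_gauss_top (P : ℝ[X]) :
    Tendsto (fun x : ℝ => P.eval x * Real.exp (-x ^ 2 / 2)) atTop (nhds 0) := by
  have h1 : Tendsto (fun x : ℝ => P.eval x / Real.exp x) atTop (nhds 0) :=
    P.tendsto_div_exp_atTop
  have h2 : Tendsto (fun x : ℝ => x - x ^ 2 / 2) atTop atBot := by
    apply tendsto_atBot_mono' atTop _ tendsto_neg_atTop_atBot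
    filter_upwards [eventually_ge_atTop (4:ℝ)] with x hx
    show x - x ^ 2 / 2 ≤ -x
    nlinarith
  have h3 : Tendsto (fun x : ℝ => Real.exp (x - x ^ 2 / 2)) atTop (nhds 0) :=
    Real.tendsto_exp_atBot.comp h2
  have h4 := h1.mul h3
  rw [mul_zero] at h4
  apply h4.congr'
  filter_upwards with x
  rw [div_mul_eq_mul_div, mul_div_assoc, ← Real.exp_sub]
  ring_nf

lemma tendsto_poly_gauss_bot (P : ℝ[X]) :
    Tendsto (fun x : ℝ => P.eval x * Real.exp (-x ^ 2 / 2)) atBot (nhds 0) := by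
  have h1 := tendsto_poly_gauss_top (P.comp (-X))
  have h2 : Tendsto (fun x : ℝ => -x) atBot atTop := tendsto_neg_atBot_atTop
  have h3 := h1.comp h2
  apply h3.congr
  intro x
  simp [Polynomial.eval_comp]

lemma tendsto_poly_gw_top (P : ℝ[X]) :
    Tendsto (fun x : ℝ => P.eval x * gw x) atTop (nhds 0) := by
  have := (tendsto_poly_gauss_top P).const_mul ((Real.sqrt (2 * Real.pi))⁻¹)
  rw [mul_zero] at this
  apply this.congr
  intro x; unfold gw; ring

lemma tendsto_poly_gw_bot (P : ℝ[X]) :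
    Tendsto (fun x : ℝ => P.eval x * gw x) atBot (nhds 0) := by
  have := (tendsto_poly_gauss_bot P).const_mul ((Real.sqrt (2 * Real.pi))⁻¹)
  rw [mul_zero] at this
  apply this.congr
  intro x; unfold gw; ring

lemma gw_hasDeriv (x : ℝ) : HasDerivAt gw (-x * gw x) x := by
  unfold gw
  have h1 : HasDerivAt (fun x : ℝ => -x ^ 2 / 2) (-x) x := by
    have := ((hasDerivAt_pow 2 x).neg).div_const 2
    simpa using this.congr_deriv (by ring)
  have h2 := (h1.exp).const_mul ((Real.sqrt (2 * Real.pi))⁻¹)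
  simpa [mul_comm, mul_assoc, mul_left_comm] using h2

lemma gi_X_mul (P : ℝ[X]) : gi (X * P) = gi (derivative P) := by
  have hderiv : ∀ x : ℝ, HasDerivAt (fun y : ℝ => -(P.eval y) * gw y)
      ((X * P).eval x * gw x - (derivative P).eval x * gw x) x := by
    intro x
    have h1 : HasDerivAt (fun y : ℝ => P.eval y) ((derivative P).eval x) x :=
      P.hasDerivAt x
    have := (h1.neg).mul (gw_hasDeriv x)
    apply this.congr_deriv
    simp only [Polynomial.eval_mul, Polynomial.eval_X, Pi.neg_apply]
    ring
  have hint : Integrable (fun x : ℝ => (X * P).eval x * gw x - (derivative P).eval x * gw x) :=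
    (integrable_poly_gw _).sub (integrable_poly_gw _)
  have htop : Tendsto (fun y : ℝ => -(P.eval y) * gw y) atTop (nhds 0) := by
    have := (tendsto_poly_gw_top P).neg
    rw [neg_zero] at this
    apply this.congr; intro x; ring
  have hbot : Tendsto (fun y : ℝ => -(P.eval y) * gw y) atBot (nhds 0) := by
    have := (tendsto_poly_gw_bot P).neg
    rw [neg_zero] at this
    apply this.congr; intro x; ring
  have := MeasureTheory.integral_of_hasDerivAt_of_tendsto hderiv hint hbot htop
  rw [sub_zero] at this
  have h2 : ∫ x : ℝ, ((X * P).eval x * gw x - (derivative P).eval x * gw x)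
      = gi (X * P) - gi (derivative P) :=
    MeasureTheory.integral_sub (integrable_poly_gw _) (integrable_poly_gw _)
  rw [h2] at this
  linarith

lemma gi_add (P Q : ℝ[X]) : gi (P + Q) = gi P + gi Q := by
  unfold gi
  rw [← MeasureTheory.integral_add (integrable_poly_gw P) (integrable_poly_gw Q)]
  simp [add_mul]

lemma gi_sub (P Q : ℝ[X]) : gi (P - Q) = gi P - gi Q := by
  unfold gi
  rw [← MeasureTheory.integral_sub (integrable_poly_gw P) (integrable_poly_gw Q)]
  simp [sub_mul]

lemma gi_const_mul (c : ℝ) (P : ℝ[X]) : gi (C c * P) = c * gi P := by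
  unfold gi
  rw [← MeasureTheory.integral_const_mul]
  simp [mul_assoc]


noncomputable def Hp : ℕ → ℝ[X]
  | 0 => 1
  | (k+1) => X * Hp k - derivative (Hp k)

lemma Hp_zero : Hp 0 = 1 := rfl
lemma Hp_succ (k : ℕ) : Hp (k+1) = X * Hp k - derivative (Hp k) := rfl

lemma Hp_deriv : ∀ k : ℕ, derivative (Hp (k+1)) = C ((k : ℝ)+1) * Hp k := by
  intro k
  induction k with
  | zero =>
      rw [Hp_succ, Hp_zero]
      simp
  | succ k ih =>
      rw [Hp_succ (k+1), derivative_sub, derivative_mul, derivative_X, one_mul, ih,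
        derivative_mul, derivative_C, zero_mul, zero_add, Hp_succ k]
      have hc : (C ((k:ℝ)+1+1) : ℝ[X]) = C ((k:ℝ)+1) + 1 := by
        rw [map_add, map_one]
      push_cast
      rw [hc]
      ring

-- moments of monomials against Hermite
noncomputable def ee (a b : ℕ) : ℝ := gi (X ^ a * Hp b)

lemma ee_zero_succ (b : ℕ) : ee 0 (b+1) = 0 := by
  unfold ee
  show gi (X ^ 0 * (X * Hp b - derivative (Hp b))) = 0
  rw [pow_zero, one_mul, gi_sub, gi_X_mul]
  ring

lemma ee_succ_succ (a b : ℕ) : ee (a+1) (b+1) = (a+1) * ee a b := by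
  unfold ee
  show gi (X ^ (a+1) * (X * Hp b - derivative (Hp b))) = _
  have h1 : X ^ (a+1) * (X * Hp b - derivative (Hp b))
      = X * (X ^ (a+1) * Hp b) - X ^ (a+1) * derivative (Hp b) := by ring
  rw [h1, gi_sub, gi_X_mul]
  have h2 : derivative (X ^ (a+1) * Hp b)
      = C ((a:ℝ)+1) * (X ^ a * Hp b) + X ^ (a+1) * derivative (Hp b) := by
    rw [derivative_mul, derivative_X_pow]
    push_cast
    ring
  rw [h2, gi_add, gi_const_mul]
  ring

lemma ee_self (a : ℕ) : ee a a = a.factorial := by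
  induction a with
  | zero =>
      show gi (X ^ 0 * Hp 0) = _
      show gi (X ^ 0 * 1) = _
      rw [pow_zero, one_mul, gi_one]
      simp
  | succ a ih =>
      rw [ee_succ_succ, ih, Nat.factorial_succ]
      push_cast
      ring

lemma ee_eq_zero : ∀ a b : ℕ, a < b → ee a b = 0 := by
  intro a
  induction a with
  | zero =>
      intro b hb
      obtain ⟨c, rfl⟩ := Nat.exists_eq_add_of_lt hb
      simpa using ee_zero_succ _
  | succ a ih =>
      intro b hb
      obtain ⟨c, rfl⟩ := Nat.exists_eq_add_of_lt hb
      have : a + 1 + c = (a + c) + 1 := by omega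
      rw [this, ee_succ_succ]
      rw [ih _ (by omega)]
      ring

noncomputable def hh (a b : ℕ) : ℝ := gi (Hp a * Hp b)

lemma hh_comm (a b : ℕ) : hh a b = hh b a := by unfold hh; rw [mul_comm]

lemma hh_zero (b : ℕ) : hh 0 b = ee 0 b := by
  unfold hh ee
  show gi (Hp 0 * Hp b) = _
  show gi (1 * Hp b) = gi (X ^ 0 * Hp b)
  rw [one_mul, pow_zero, one_mul]

lemma hh_succ_succ (a b : ℕ) : hh (a+1) (b+1) = (b+1) * hh a b := by
  unfold hh
  show gi ((X * Hp a - derivative (Hp a)) * Hp (b+1)) = _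
  have h1 : (X * Hp a - derivative (Hp a)) * Hp (b+1)
      = X * (Hp a * Hp (b+1)) - derivative (Hp a) * Hp (b+1) := by ring
  rw [h1, gi_sub, gi_X_mul, derivative_mul, gi_add, Hp_deriv]
  have : Hp a * (C ((b:ℝ)+1) * Hp b) = C ((b:ℝ)+1) * (Hp a * Hp b) := by ring
  rw [this, gi_const_mul]
  ring

lemma hh_diag (a : ℕ) : hh a a = a.factorial := by
  induction a with
  | zero =>
      rw [hh_zero]
      show ee 0 0 = _
      rw [ee_self]
  | succ a ih => rw [hh_succ_succ, ih, Nat.factorial_succ]; push_cast; ring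

lemma hh_ne : ∀ a b : ℕ, a ≠ b → hh a b = 0 := by
  intro a
  induction a with
  | zero =>
      intro b hb
      obtain ⟨c, rfl⟩ : ∃ c, b = c + 1 := ⟨b - 1, by omega⟩
      rw [hh_zero, ee_zero_succ]
  | succ a ih =>
      intro b hb
      match b with
      | 0 => rw [hh_comm, hh_zero, ee_zero_succ]
      | (c+1) =>
          rw [hh_succ_succ, ih c (by omega)]
          ring

noncomputable def mm (k : ℕ) : ℝ := gi (X ^ k)

lemma mm_zero : mm 0 = 1 := by unfold mm; rw [pow_zero, gi_one]

lemma mm_step (k : ℕ) : mm (k + 2) = (k + 1) * mm k := by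
  unfold mm
  have h : (X : ℝ[X]) ^ (k+2) = X * X ^ (k+1) := by ring
  rw [h, gi_X_mul, derivative_X_pow]
  simp only [Nat.add_sub_cancel]
  rw [gi_const_mul]
  push_cast
  ring


variable {d n : ℕ}

def cnt (i : Fin d → Fin n) (j : Fin n) : ℕ := ∑ k, if i k = j then 1 else 0

lemma cnt_sum (i : Fin d → Fin n) : ∑ j, cnt i j = d := by
  unfold cnt
  rw [Finset.sum_comm]
  simp

lemma cnt_card (i : Fin d → Fin n) (j : Fin n) :
    Fintype.card {k // i k = j} = cnt i j := by
  rw [Fintype.card_subtype]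
  unfold cnt
  rw [Finset.card_filter]

lemma prod_pow_cnt (i : Fin d → Fin n) (y : Fin n → ℝ) :
    ∏ k, y (i k) = ∏ j, y j ^ cnt i j := by
  rw [← Finset.prod_fiberwise_of_maps_to (fun k _ => Finset.mem_univ (i k)) (fun k => y (i k))]
  apply Finset.prod_congr rfl
  intro j _
  have h : ∀ k ∈ Finset.univ.filter (fun k => i k = j), y (i k) = y j :=
    fun k hk => by rw [(Finset.mem_filter.mp hk).2]
  rw [Finset.prod_congr rfl h, Finset.prod_const, Finset.card_filter]
  rfl

lemma cnt_comp_perm (i : Fin d → Fin n) (σ : Equiv.Perm (Fin d)) :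
    cnt (i ∘ σ) = cnt i := by
  funext j
  unfold cnt
  exact Fintype.sum_equiv σ _ _ (fun k => rfl)

-- the key counting equiv
def keyEquiv (i i' : Fin d → Fin n) :
    {σ : Equiv.Perm (Fin d) // i ∘ σ = i'} ≃ (∀ j, {k // i' k = j} ≃ {k // i k = j}) where
  toFun := fun ⟨σ, hσ⟩ j =>
    { toFun := fun k => ⟨σ k.1, by have := congrFun hσ k.1; simp only [Function.comp_apply] at this; rw [this, k.2]⟩
      invFun := fun k => ⟨σ.symm k.1, by
        have := congrFun hσ (σ.symm k.1)
        simp only [Function.comp_apply, Equiv.apply_symm_apply] at this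
        rw [← this, k.2]⟩
      left_inv := fun k => by simp
      right_inv := fun k => by simp }
  invFun := fun F =>
    ⟨{ toFun := fun k => (F (i' k) ⟨k, rfl⟩).1
       invFun := fun k => ((F (i k)).symm ⟨k, rfl⟩).1
       left_inv := fun k => by
         have h1 : i ((F (i' k) ⟨k, rfl⟩).1) = i' k := (F (i' k) ⟨k, rfl⟩).2
         have key : ∀ (j : Fin n) (m : Fin d) (hm : i m = j) (hj : j = i' k)
             (hm2 : (F (i' k) ⟨k, rfl⟩).1 = m),
             ((F j).symm ⟨m, hm⟩).1 = k := by
           intro j m hm hj hm2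
           subst hj
           have : (⟨m, hm⟩ : {x // i x = i' k}) = F (i' k) ⟨k, rfl⟩ := by
             apply Subtype.ext
             exact hm2.symm
           rw [this, Equiv.symm_apply_apply]
         exact key (i ((F (i' k) ⟨k, rfl⟩).1)) _ rfl h1 rfl
       right_inv := fun k => by
         have h1 : i' (((F (i k)).symm ⟨k, rfl⟩).1) = i k := ((F (i k)).symm ⟨k, rfl⟩).2
         have key : ∀ (j : Fin n) (m : Fin d) (hm : i' m = j) (hj : j = i k)
             (hm2 : ((F (i k)).symm ⟨k, rfl⟩).1 = m),
             ((F j) ⟨m, hm⟩).1 = k := by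
           intro j m hm hj hm2
           subst hj
           have : (⟨m, hm⟩ : {x // i' x = i k}) = (F (i k)).symm ⟨k, rfl⟩ := by
             apply Subtype.ext
             exact hm2.symm
           rw [this, Equiv.apply_symm_apply]
         exact key (i' (((F (i k)).symm ⟨k, rfl⟩).1)) _ rfl h1 rfl },
     funext fun k => (F (i' k) ⟨k, rfl⟩).2⟩
  left_inv := fun ⟨σ, hσ⟩ => by
    apply Subtype.ext
    ext k
    rfl
  right_inv := fun F => by
    funext j
    apply Equiv.ext
    intro k
    apply Subtype.ext
    show (F (i' k.1) ⟨k.1, rfl⟩).1 = (F j k).1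
    have key : ∀ (j' : Fin n) (hj : j' = j) (hk : i' k.1 = j'),
        (F j' ⟨k.1, hk⟩).1 = (F j k).1 := by
      intro j' hj hk
      subst hj
      have : (⟨k.1, hk⟩ : {m // i' m = j'}) = k := Subtype.ext rfl
      rw [this]
    exact key (i' k.1) k.2 rfl

lemma card_perm_comp (i i' : Fin d → Fin n) :
    Fintype.card {σ : Equiv.Perm (Fin d) // i ∘ σ = i'}
      = if cnt i = cnt i' then ∏ j, (cnt i j).factorial else 0 := by
  split_ifs with hc
  · rw [Fintype.card_congr (keyEquiv i i')]
    rw [Fintype.card_pi]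
    apply Finset.prod_congr rfl
    intro j _
    have h1 : Fintype.card {k // i' k = j} = Fintype.card {k // i k = j} := by
      rw [cnt_card, cnt_card, hc]
    rw [Fintype.card_equiv (Fintype.equivOfCardEq h1), cnt_card, hc]
  · rw [Fintype.card_eq_zero_iff]
    constructor
    intro ⟨σ, hσ⟩
    exact hc (hσ ▸ (cnt_comp_perm i σ).symm)



variable {n : ℕ}

noncomputable def polyProd (Q : Fin n → ℝ[X]) : (Fin n → ℝ) → ℝ :=
  fun x => ∏ j, ((Q j).eval (x j) * gw (x j))

lemma integrable_polyProd (Q : Fin n → ℝ[X]) : Integrable (polyProd Q) :=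
  Integrable.fintype_prod (f := fun j t => (Q j).eval t * gw t) (fun j => integrable_poly_gw (Q j))

lemma integral_polyProd (Q : Fin n → ℝ[X]) : ∫ x, polyProd Q x = ∏ j, gi (Q j) :=
  MeasureTheory.integral_fintype_prod_eq_prod (ι := Fin n) (μ := fun _ => volume) (fun j t => (Q j).eval t * gw t)

section sums
variable {ι : Type*} [Fintype ι]

lemma integrable_sum_polyProd (c : ι → ℝ) (Q : ι → Fin n → ℝ[X]) :
    Integrable (fun x => ∑ v, c v * polyProd (Q v) x) :=
  integrable_finset_sum _ (fun v _ => (integrable_polyProd (Q v)).const_mul (c v))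

lemma integral_sum_polyProd (c : ι → ℝ) (Q : ι → Fin n → ℝ[X]) :
    ∫ x, ∑ v, c v * polyProd (Q v) x = ∑ v, c v * ∏ j, gi (Q v j) := by
  rw [MeasureTheory.integral_finset_sum _
    (fun v _ => (integrable_polyProd (Q v)).const_mul (c v))]
  apply Finset.sum_congr rfl
  intro v _
  rw [MeasureTheory.integral_const_mul, integral_polyProd]

end sums


variable {d n : ℕ}

lemma prod_ee_eq (i i' : Fin d → Fin n) :
    ∏ j, ee (cnt i j) (cnt i' j)
      = if cnt i = cnt i' then ∏ j, ((cnt i j).factorial : ℝ) else 0 := by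
  split_ifs with hc
  · rw [hc]
    exact Finset.prod_congr rfl (fun j _ => ee_self _)
  · obtain ⟨j0, hj0⟩ : ∃ j, cnt i j < cnt i' j := by
      by_contra hno
      push_neg at hno
      apply hc
      funext j
      have := (Finset.sum_eq_sum_iff_of_le (fun j _ => hno j)).mp
        (by rw [cnt_sum, cnt_sum])
      exact (this j (Finset.mem_univ j)).symm
    exact Finset.prod_eq_zero (Finset.mem_univ j0) (ee_eq_zero _ _ hj0)

lemma prod_hh_eq (i i' : Fin d → Fin n) :
    ∏ j, hh (cnt i j) (cnt i' j)
      = if cnt i = cnt i' then ∏ j, ((cnt i j).factorial : ℝ) else 0 := by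
  split_ifs with hc
  · rw [hc]
    exact Finset.prod_congr rfl (fun j _ => hh_diag _)
  · obtain ⟨j0, hj0⟩ : ∃ j, cnt i j ≠ cnt i' j := by
      by_contra hno
      push_neg at hno
      exact hc (funext hno)
    exact Finset.prod_eq_zero (Finset.mem_univ j0) (hh_ne _ _ hj0)

lemma Q_eq (T : (Fin d → Fin n) → ℝ)
    (hsymm : ∀ (σ : Equiv.Perm (Fin d)) (i : Fin d → Fin n), T (i ∘ σ) = T i) :
    (∑ i, ∑ i', T i * T i' *
        (if cnt i = cnt i' then ∏ j, ((cnt i j).factorial : ℝ) else 0))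
      = d.factorial * ∑ i, T i ^ 2 := by
  have h1 : ∀ i i' : Fin d → Fin n,
      (if cnt i = cnt i' then ∏ j, ((cnt i j).factorial : ℝ) else 0)
        = ((Finset.univ.filter fun σ : Equiv.Perm (Fin d) => i ∘ σ = i').card : ℝ) := by
    intro i i'
    rw [← Fintype.card_subtype, card_perm_comp]
    split_ifs <;> push_cast <;> simp
  have h2 : ∀ i : Fin d → Fin n,
      (∑ i', T i * T i' *
        ((Finset.univ.filter fun σ : Equiv.Perm (Fin d) => i ∘ σ = i').card : ℝ))
      = ∑ σ : Equiv.Perm (Fin d), T i * T (i ∘ σ) := by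
    intro i
    rw [← Finset.sum_fiberwise_of_maps_to
      (g := fun σ : Equiv.Perm (Fin d) => i ∘ σ)
      (fun σ _ => Finset.mem_univ _) (fun σ => T i * T (i ∘ σ))]
    apply Finset.sum_congr rfl
    intro i' _
    rw [Finset.sum_congr rfl
      (fun σ hσ => by rw [(Finset.mem_filter.mp hσ).2] :
        ∀ σ ∈ Finset.univ.filter fun σ : Equiv.Perm (Fin d) => i ∘ σ = i',
          T i * T (i ∘ σ) = T i * T i'),
      Finset.sum_const, nsmul_eq_mul]
    ring
  simp_rw [h1, h2, hsymm]
  rw [Finset.sum_comm]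
  simp_rw [Finset.sum_const, Finset.card_univ, nsmul_eq_mul]
  rw [Fintype.card_perm, Fintype.card_fin]
  congr 1
  apply Finset.sum_congr rfl
  intro i _
  ring

lemma cnt_cons (a : Fin n) (ψ : Fin d → Fin n) (j : Fin n) :
    cnt (Fin.cons a ψ) j = (if a = j then 1 else 0) + cnt ψ j := by
  unfold cnt
  rw [Fin.sum_univ_succ]
  simp [Fin.cons_zero, Fin.cons_succ]

lemma R_eq : ∀ d : ℕ, (∑ φ : Fin d → Fin n, ∏ j, mm (2 * cnt φ j))
    = ∏ j ∈ Finset.range d, ((n : ℝ) + 2 * j) := by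
  intro d
  induction d with
  | zero =>
      rw [Finset.range_zero, Finset.prod_empty]
      have h0 : ∀ (φ : Fin 0 → Fin n) (j : Fin n), cnt φ j = 0 := by
        intro φ j; simp [cnt]
      simp [h0, mm_zero]
  | succ d ih =>
      rw [← Equiv.sum_comp (Fin.consEquiv (fun _ : Fin (d+1) => Fin n))
        (fun φ => ∏ j, mm (2 * cnt φ j)), Fintype.sum_prod_type]
      have key : ∀ (a : Fin n) (ψ : Fin d → Fin n),
          ∏ j, mm (2 * cnt (Fin.cons a ψ) j)
            = (2 * (cnt ψ a : ℝ) + 1) * ∏ j, mm (2 * cnt ψ j) := by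
        intro a ψ
        rw [← Finset.mul_prod_erase Finset.univ _ (Finset.mem_univ a),
            ← Finset.mul_prod_erase Finset.univ
              (fun j => mm (2 * cnt ψ j)) (Finset.mem_univ a)]
        have h1 : cnt (Fin.cons a ψ) a = cnt ψ a + 1 := by
          rw [cnt_cons]; simp; omega
        have h2 : 2 * (cnt ψ a + 1) = 2 * cnt ψ a + 2 := by ring
        have h3 : ∏ j ∈ Finset.univ.erase a, mm (2 * cnt (Fin.cons a ψ) j)
            = ∏ j ∈ Finset.univ.erase a, mm (2 * cnt ψ j) := by
          apply Finset.prod_congr rfl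
          intro j hj
          have hne : a ≠ j := fun h => (Finset.mem_erase.mp hj).1 h.symm
          rw [cnt_cons, if_neg hne, zero_add]
        rw [h1, h2, mm_step, h3]
        push_cast
        ring
      have hconsa : ∀ (a : Fin n) (ψ : Fin d → Fin n),
          (Fin.consEquiv (fun _ : Fin (d+1) => Fin n)) (a, ψ) = Fin.cons a ψ := by
        intro a ψ; rfl
      simp_rw [hconsa, key]
      rw [Finset.sum_comm]
      have h4 : ∀ ψ : Fin d → Fin n,
          (∑ a, (2 * (cnt ψ a : ℝ) + 1) * ∏ j, mm (2 * cnt ψ j))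
            = ((n : ℝ) + 2 * d) * ∏ j, mm (2 * cnt ψ j) := by
        intro ψ
        rw [← Finset.sum_mul]
        congr 1
        rw [Finset.sum_add_distrib, ← Finset.mul_sum]
        have : ∑ a, (cnt ψ a : ℝ) = (d : ℝ) := by
          rw [← Nat.cast_sum]
          rw [cnt_sum]
        rw [this]
        simp
        ring
      simp_rw [h4]
      rw [← Finset.mul_sum, ih, Finset.prod_range_succ]
      ring

lemma pt_expand {d n : ℕ} (A B : (Fin d → Fin n) → ℝ) (P Q : ℕ → ℝ[X]) (x : Fin n → ℝ) :
    (∑ i, A i * ∏ j, (P (cnt i j)).eval (x j)) * (∑ i, B i * ∏ j, (Q (cnt i j)).eval (x j))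
        * (∏ j, gw (x j))
      = ∑ p : (Fin d → Fin n) × (Fin d → Fin n),
          (A p.1 * B p.2) * polyProd (fun j => P (cnt p.1 j) * Q (cnt p.2 j)) x := by
  rw [Finset.sum_mul_sum, Fintype.sum_prod_type, Finset.sum_mul]
  apply Finset.sum_congr rfl
  intro i _
  rw [Finset.sum_mul]
  apply Finset.sum_congr rfl
  intro i' _
  unfold polyProd
  simp only [Polynomial.eval_mul]
  rw [Finset.prod_mul_distrib, Finset.prod_mul_distrib]
  ring

lemma int_pair {d n : ℕ} (A B : (Fin d → Fin n) → ℝ) (P Q : ℕ → ℝ[X]) :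
    ∫ x : Fin n → ℝ, ∑ p : (Fin d → Fin n) × (Fin d → Fin n),
        (A p.1 * B p.2) * polyProd (fun j => P (cnt p.1 j) * Q (cnt p.2 j)) x
      = ∑ i, ∑ i', (A i * B i') * ∏ j, gi (P (cnt i j) * Q (cnt i' j)) := by
  rw [integral_sum_polyProd, Fintype.sum_prod_type]

lemma pt_norm {d n : ℕ} (x : Fin n → ℝ) :
    ((∑ j, x j ^ 2) ^ d) * (∏ j, gw (x j))
      = ∑ φ : Fin d → Fin n, polyProd (fun j => (X : ℝ[X]) ^ (2 * cnt φ j)) x := by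
  have h1 : (∑ j, x j ^ 2) ^ d = ∑ φ : Fin d → Fin n, ∏ k, (x (φ k)) ^ 2 := by
    calc (∑ j, x j ^ 2) ^ d = ∏ _k : Fin d, (∑ j, x j ^ 2) := by
          rw [Finset.prod_const, Finset.card_univ, Fintype.card_fin]
      _ = ∑ φ : Fin d → Fin n, ∏ k, (x (φ k)) ^ 2 := by
          rw [Finset.prod_univ_sum]
          rw [Fintype.piFinset_univ]
  rw [h1, Finset.sum_mul]
  apply Finset.sum_congr rfl
  intro φ _
  unfold polyProd
  rw [Finset.prod_mul_distrib]
  congr 1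
  rw [Finset.prod_pow, prod_pow_cnt φ x, ← Finset.prod_pow]
  apply Finset.prod_congr rfl
  intro j _
  rw [← pow_mul, Polynomial.eval_pow, Polynomial.eval_X, mul_comm 2 (cnt φ j), pow_mul]
/-- Every symmetric tensor `T ∈ Sym^d(ℝⁿ)` satisfies
`‖T‖_∞ ≥ 2^(-d/2)·C(d+n-1,d)^(-1/2)·‖T‖`, where `‖T‖_∞ = max_{x∈S^(n-1)}|⟨T,x⊗⋯⊗x⟩|` and
`‖T‖` is the Frobenius norm; equivalently `‖T‖ ≤ 2^(d/2)·√C(d+n-1,d)·‖T‖_∞`. -/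
theorem stmt_13 (n d : ℕ) (hn : 1 ≤ n) (T : (Fin d → Fin n) → ℝ)
    (hsymm : ∀ (σ : Equiv.Perm (Fin d)) (i : Fin d → Fin n), T (i ∘ σ) = T i) :
    Real.sqrt (∑ i : Fin d → Fin n, T i ^ 2) ≤
      (2 : ℝ) ^ ((d : ℝ) / 2) * Real.sqrt ((d + n - 1).choose d) *
        ⨆ x : Metric.sphere (0 : EuclideanSpace ℝ (Fin n)) 1,
          |∑ i : Fin d → Fin n, T i * ∏ k, (x : EuclideanSpace ℝ (Fin n)) (i k)| := by
  obtain ⟨m, rfl⟩ : ∃ m, n = m + 1 := ⟨n - 1, by omega⟩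
  set S := ⨆ x : Metric.sphere (0 : EuclideanSpace ℝ (Fin (m+1))) 1,
      |∑ i : Fin d → Fin (m+1), T i * ∏ k, (x : EuclideanSpace ℝ (Fin (m+1))) (i k)| with hSdef
  -- the sphere is nonempty
  have hsphere_ne : EuclideanSpace.single (0 : Fin (m+1)) (1:ℝ)
      ∈ Metric.sphere (0 : EuclideanSpace ℝ (Fin (m+1))) 1 := by
    rw [Metric.mem_sphere, dist_zero_right, EuclideanSpace.norm_single, norm_one]
  -- continuity of the evaluation function
  have hc1 : ∀ l : Fin (m+1), Continuous (fun y : EuclideanSpace ℝ (Fin (m+1)) => y l) := by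
    intro l
    exact (continuous_apply l).comp (PiLp.continuous_ofLp (p := 2) (β := fun _ : Fin (m+1) => ℝ))
  have hcont : Continuous (fun y : EuclideanSpace ℝ (Fin (m+1)) =>
      |∑ i : Fin d → Fin (m+1), T i * ∏ k, y (i k)|) := by
    apply Continuous.abs
    apply continuous_finset_sum
    intro i _
    exact continuous_const.mul (continuous_finset_prod _ (fun k _ => hc1 (i k)))
  obtain ⟨x0, hx0mem, hx0max⟩ := (isCompact_sphere (0 : EuclideanSpace ℝ (Fin (m+1))) 1).exists_isMaxOn
    ⟨_, hsphere_ne⟩ hcont.continuousOn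
  have hbdd : BddAbove (Set.range fun y : Metric.sphere (0 : EuclideanSpace ℝ (Fin (m+1))) 1 =>
      |∑ i : Fin d → Fin (m+1), T i * ∏ k, (y : EuclideanSpace ℝ (Fin (m+1))) (i k)|) := by
    refine ⟨|∑ i : Fin d → Fin (m+1), T i * ∏ k, x0 (i k)|, ?_⟩
    rintro v ⟨y, rfl⟩
    exact hx0max y.2
  have hS_le : ∀ y : Metric.sphere (0 : EuclideanSpace ℝ (Fin (m+1))) 1,
      |∑ i : Fin d → Fin (m+1), T i * ∏ k, (y : EuclideanSpace ℝ (Fin (m+1))) (i k)| ≤ S :=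
    fun y => le_ciSup hbdd y
  have hS0 : 0 ≤ S := le_trans (abs_nonneg _) (hS_le ⟨_, hsphere_ne⟩)
  -- pointwise bound
  have habs : ∀ x : Fin (m+1) → ℝ,
      |∑ i : Fin d → Fin (m+1), T i * ∏ k, x (i k)| ≤ S * Real.sqrt (∑ j, x j ^ 2) ^ d := by
    intro x
    have hs : 0 ≤ ∑ j, x j ^ 2 := Finset.sum_nonneg fun j _ => sq_nonneg _
    rcases eq_or_lt_of_le hs with hs0 | hs0
    · have hz : ∀ j, x j = 0 := by
        intro j
        have := (Finset.sum_eq_zero_iff_of_nonneg (fun j _ => sq_nonneg (x j))).mp hs0.symm j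
          (Finset.mem_univ j)
        exact pow_eq_zero_iff (two_ne_zero) |>.mp this
      cases d with
      | zero =>
          have hFx : ∀ y : Fin (m+1) → ℝ,
              (∑ i : Fin 0 → Fin (m+1), T i * ∏ k, y (i k)) = ∑ i, T i := by
            intro y
            apply Finset.sum_congr rfl
            intro i _
            simp
          rw [hFx, pow_zero, mul_one]
          have h2 := hS_le ⟨_, hsphere_ne⟩
          rw [hFx] at h2
          exact h2
      | succ e =>
          have hF0 : (∑ i : Fin (e+1) → Fin (m+1), T i * ∏ k, x (i k)) = 0 := by
            apply Finset.sum_eq_zero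
            intro i _
            rw [Finset.prod_eq_zero (Finset.mem_univ 0) (hz (i 0))]
            ring
          rw [hF0, abs_zero]
          exact mul_nonneg hS0 (pow_nonneg (Real.sqrt_nonneg _) _)
    · set r := Real.sqrt (∑ j, x j ^ 2) with hr_def
      have hr : 0 < r := Real.sqrt_pos.mpr hs0
      set u : EuclideanSpace ℝ (Fin (m+1)) := WithLp.toLp 2 (fun j => x j / r) with hu_def
      have hsum_u : ∑ j, u j ^ 2 = 1 := by
        simp only [hu_def, PiLp.toLp_apply, div_pow]
        rw [← Finset.sum_div, hr_def, Real.sq_sqrt hs]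
        exact div_self (ne_of_gt hs0)
      have humem : u ∈ Metric.sphere (0 : EuclideanSpace ℝ (Fin (m+1))) 1 := by
        rw [Metric.mem_sphere, dist_zero_right, EuclideanSpace.norm_eq]
        simp_rw [Real.norm_eq_abs, sq_abs]
        rw [hsum_u, Real.sqrt_one]
      have hFx : (∑ i : Fin d → Fin (m+1), T i * ∏ k, x (i k))
          = r ^ d * ∑ i : Fin d → Fin (m+1), T i * ∏ k, u (i k) := by
        rw [Finset.mul_sum]
        apply Finset.sum_congr rfl
        intro i _
        have hprod : ∏ k, u (i k) = (∏ k, x (i k)) / r ^ d := by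
          simp only [hu_def, PiLp.toLp_apply]
          rw [Finset.prod_div_distrib, Finset.prod_const, Finset.card_univ, Fintype.card_fin]
        rw [hprod]
        field_simp
      have hFu := hS_le ⟨u, humem⟩
      calc |∑ i : Fin d → Fin (m+1), T i * ∏ k, x (i k)|
          = r ^ d * |∑ i : Fin d → Fin (m+1), T i * ∏ k, u (i k)| := by
            rw [hFx, abs_mul, abs_pow, abs_of_pos hr]
        _ ≤ r ^ d * S := mul_le_mul_of_nonneg_left hFu (pow_nonneg hr.le d)
        _ = S * r ^ d := mul_comm _ _
  -- now the integral machinery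
  set Wf := fun x : Fin (m+1) → ℝ => ∏ j, gw (x j) with hWf
  set G := fun x : Fin (m+1) → ℝ =>
    ∑ i : Fin d → Fin (m+1), T i * ∏ j, ((X : ℝ[X]) ^ cnt i j).eval (x j) with hG
  set Hf := fun x : Fin (m+1) → ℝ =>
    ∑ i : Fin d → Fin (m+1), T i * ∏ j, (Hp (cnt i j)).eval (x j) with hHf
  have Wnn : ∀ x : Fin (m+1) → ℝ, 0 ≤ Wf x :=
    fun x => Finset.prod_nonneg (fun j _ => gw_nonneg _)
  set Qv := ∑ i : Fin d → Fin (m+1), ∑ i' : Fin d → Fin (m+1), (T i * T i') *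
      (if cnt i = cnt i' then ∏ j, ((cnt i j).factorial : ℝ) else 0) with hQv
  have e1 : (fun x : Fin (m+1) → ℝ => G x * Hf x * Wf x)
      = fun x => ∑ p : (Fin d → Fin (m+1)) × (Fin d → Fin (m+1)),
          (T p.1 * T p.2) * polyProd (fun j => (X : ℝ[X]) ^ cnt p.1 j * Hp (cnt p.2 j)) x := by
    funext x
    exact pt_expand T T (fun c => (X : ℝ[X]) ^ c) Hp x
  have e2 : (fun x : Fin (m+1) → ℝ => G x * G x * Wf x)
      = fun x => ∑ p : (Fin d → Fin (m+1)) × (Fin d → Fin (m+1)),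
          (T p.1 * T p.2) * polyProd (fun j => (X : ℝ[X]) ^ cnt p.1 j * (X : ℝ[X]) ^ cnt p.2 j) x := by
    funext x
    exact pt_expand T T (fun c => (X : ℝ[X]) ^ c) (fun c => (X : ℝ[X]) ^ c) x
  have e3 : (fun x : Fin (m+1) → ℝ => Hf x * Hf x * Wf x)
      = fun x => ∑ p : (Fin d → Fin (m+1)) × (Fin d → Fin (m+1)),
          (T p.1 * T p.2) * polyProd (fun j => Hp (cnt p.1 j) * Hp (cnt p.2 j)) x := by
    funext x
    exact pt_expand T T Hp Hp x
  have e4 : (fun x : Fin (m+1) → ℝ => (∑ j, x j ^ 2) ^ d * Wf x)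
      = fun x => ∑ φ : Fin d → Fin (m+1), polyProd (fun j => (X : ℝ[X]) ^ (2 * cnt φ j)) x := by
    funext x
    exact pt_norm x
  have int1 : Integrable (fun x : Fin (m+1) → ℝ => G x * Hf x * Wf x) := by
    rw [e1]; exact integrable_sum_polyProd _ _
  have int2 : Integrable (fun x : Fin (m+1) → ℝ => G x * G x * Wf x) := by
    rw [e2]; exact integrable_sum_polyProd _ _
  have int3 : Integrable (fun x : Fin (m+1) → ℝ => Hf x * Hf x * Wf x) := by
    rw [e3]; exact integrable_sum_polyProd _ _
  have int4 : Integrable (fun x : Fin (m+1) → ℝ => (∑ j, x j ^ 2) ^ d * Wf x) := by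
    rw [e4]; exact integrable_finset_sum _ (fun φ _ => integrable_polyProd _)
  have val1 : ∫ x : Fin (m+1) → ℝ, G x * Hf x * Wf x = Qv := by
    rw [e1]
    have := int_pair T T (fun c => (X : ℝ[X]) ^ c) Hp
    rw [this, hQv]
    apply Finset.sum_congr rfl
    intro i _
    apply Finset.sum_congr rfl
    intro i' _
    congr 1
    exact prod_ee_eq i i'
  have val3 : ∫ x : Fin (m+1) → ℝ, Hf x * Hf x * Wf x = Qv := by
    rw [e3]
    have := int_pair T T Hp Hp
    rw [this, hQv]
    apply Finset.sum_congr rfl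
    intro i _
    apply Finset.sum_congr rfl
    intro i' _
    congr 1
    exact prod_hh_eq i i'
  have val4 : ∫ x : Fin (m+1) → ℝ, (∑ j, x j ^ 2) ^ d * Wf x
      = ∏ j ∈ Finset.range d, (((m+1 : ℕ) : ℝ) + 2 * j) := by
    rw [e4, MeasureTheory.integral_finset_sum _ (fun φ _ => integrable_polyProd _)]
    have h5 : ∀ φ : Fin d → Fin (m+1),
        ∫ x, polyProd (fun j => (X : ℝ[X]) ^ (2 * cnt φ j)) x = ∏ j, mm (2 * cnt φ j) :=
      fun φ => integral_polyProd _
    rw [Finset.sum_congr rfl fun φ _ => h5 φ]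
    exact R_eq d
  -- lower bound
  have hlow : Qv ≤ ∫ x : Fin (m+1) → ℝ, G x * G x * Wf x := by
    have h0 : (0:ℝ) ≤ ∫ x : Fin (m+1) → ℝ, (G x - Hf x) ^ 2 * Wf x :=
      MeasureTheory.integral_nonneg fun x => mul_nonneg (sq_nonneg _) (Wnn x)
    have hexp : (fun x : Fin (m+1) → ℝ => (G x - Hf x) ^ 2 * Wf x)
        = fun x => (G x * G x * Wf x - 2 * (G x * Hf x * Wf x)) + Hf x * Hf x * Wf x := by
      funext x; ring
    have intB : Integrable (fun x : Fin (m+1) → ℝ => 2 * (G x * Hf x * Wf x)) :=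
      int1.const_mul 2
    have intA : Integrable
        (fun x : Fin (m+1) → ℝ => G x * G x * Wf x - 2 * (G x * Hf x * Wf x)) :=
      int2.sub intB
    rw [hexp, MeasureTheory.integral_add intA int3,
      MeasureTheory.integral_sub int2 intB,
      MeasureTheory.integral_const_mul, val1, val3] at h0
    linarith
  -- bridge G with the plain form
  have hGF : ∀ x : Fin (m+1) → ℝ,
      G x = ∑ i : Fin d → Fin (m+1), T i * ∏ k, x (i k) := by
    intro x
    rw [hG]
    apply Finset.sum_congr rfl
    intro i _
    congr 1
    rw [prod_pow_cnt i x]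
    apply Finset.prod_congr rfl
    intro j _
    simp
  -- upper bound
  have hpt2 : ∀ x : Fin (m+1) → ℝ,
      G x * G x * Wf x ≤ (S * S) * ((∑ j, x j ^ 2) ^ d * Wf x) := by
    intro x
    have hs' : 0 ≤ ∑ j, x j ^ 2 := Finset.sum_nonneg fun j _ => sq_nonneg _
    have h1 := habs x
    have h2 : G x * G x ≤ (S * S) * (∑ j, x j ^ 2) ^ d := by
      have h3 := mul_le_mul h1 h1 (abs_nonneg _) (le_trans (abs_nonneg _) h1)
      rw [abs_mul_abs_self] at h3
      calc G x * G x
          = (∑ i : Fin d → Fin (m+1), T i * ∏ k, x (i k))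
            * (∑ i : Fin d → Fin (m+1), T i * ∏ k, x (i k)) := by rw [hGF]
        _ ≤ (S * Real.sqrt (∑ j, x j ^ 2) ^ d) * (S * Real.sqrt (∑ j, x j ^ 2) ^ d) := h3
        _ = (S * S) * ((Real.sqrt (∑ j, x j ^ 2) ^ 2) ^ d) := by ring
        _ = (S * S) * (∑ j, x j ^ 2) ^ d := by rw [Real.sq_sqrt hs']
    calc G x * G x * Wf x ≤ ((S * S) * (∑ j, x j ^ 2) ^ d) * Wf x :=
          mul_le_mul_of_nonneg_right h2 (Wnn x)
      _ = (S * S) * ((∑ j, x j ^ 2) ^ d * Wf x) := by ring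
  have hup : ∫ x : Fin (m+1) → ℝ, G x * G x * Wf x
      ≤ (S * S) * ∏ j ∈ Finset.range d, (((m+1 : ℕ) : ℝ) + 2 * j) := by
    have h6 := MeasureTheory.integral_mono int2 (int4.const_mul (S * S)) hpt2
    rwa [MeasureTheory.integral_const_mul, val4] at h6
  have hQeq : Qv = d.factorial * ∑ i, T i ^ 2 := Q_eq T hsymm
  have key : (d.factorial : ℝ) * ∑ i, T i ^ 2
      ≤ (S * S) * ∏ j ∈ Finset.range d, (((m+1 : ℕ) : ℝ) + 2 * j) := by
    rw [← hQeq]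
    exact le_trans hlow hup
  -- numerics
  have hNat : ∀ D : ℕ, (∏ j ∈ Finset.range D, (m + 1 + j)) * m.factorial = (D + m).factorial := by
    intro D
    induction D with
    | zero => simp
    | succ D ih =>
        rw [Finset.prod_range_succ, mul_comm (∏ j ∈ Finset.range D, (m + 1 + j)) (m + 1 + D),
          mul_assoc, ih]
        have h7 : D + 1 + m = (D + m) + 1 := by omega
        rw [h7, Nat.factorial_succ]
        congr 1
        omega
  have hchoose : (∏ j ∈ Finset.range d, (m + 1 + j)) = d.factorial * ((d + m).choose d) := by
    apply Nat.eq_of_mul_eq_mul_right m.factorial_pos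
    rw [hNat d]
    have h2 := Nat.choose_mul_factorial_mul_factorial (Nat.le_add_right d m)
    have h3 : d + m - d = m := by omega
    rw [h3] at h2
    rw [← h2]
    ring
  have hprodle : ∏ j ∈ Finset.range d, (((m+1 : ℕ) : ℝ) + 2 * j)
      ≤ 2 ^ d * ((d.factorial * ((d + m).choose d) : ℕ) : ℝ) := by
    calc ∏ j ∈ Finset.range d, (((m+1 : ℕ) : ℝ) + 2 * j)
        ≤ ∏ j ∈ Finset.range d, 2 * (((m+1 : ℕ) : ℝ) + j) := by
          apply Finset.prod_le_prod
          · intro j _; positivity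
          · intro j _
            have : (0:ℝ) ≤ ((m+1 : ℕ) : ℝ) := Nat.cast_nonneg _
            linarith
      _ = 2 ^ d * ∏ j ∈ Finset.range d, (((m+1 : ℕ) : ℝ) + j) := by
          rw [Finset.prod_mul_distrib, Finset.prod_const, Finset.card_range]
      _ = 2 ^ d * ((∏ j ∈ Finset.range d, (m + 1 + j) : ℕ) : ℝ) := by
          push_cast
          ring
      _ = 2 ^ d * ((d.factorial * ((d + m).choose d) : ℕ) : ℝ) := by rw [hchoose]
  have key2 : ∑ i, T i ^ 2 ≤ (2 ^ d * (((d + m).choose d : ℕ) : ℝ)) * S ^ 2 := by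
    have h8 : (d.factorial : ℝ) * ∑ i, T i ^ 2
        ≤ (d.factorial : ℝ) * ((2 ^ d * (((d + m).choose d : ℕ) : ℝ)) * S ^ 2) := by
      calc (d.factorial : ℝ) * ∑ i, T i ^ 2
          ≤ (S * S) * ∏ j ∈ Finset.range d, (((m+1 : ℕ) : ℝ) + 2 * j) := key
        _ ≤ (S * S) * (2 ^ d * ((d.factorial * ((d + m).choose d) : ℕ) : ℝ)) := by
            apply mul_le_mul_of_nonneg_left hprodle (mul_nonneg hS0 hS0)
        _ = (d.factorial : ℝ) * ((2 ^ d * (((d + m).choose d : ℕ) : ℝ)) * S ^ 2) := by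
            push_cast
            ring
    exact le_of_mul_le_mul_left h8 (by positivity)
  -- final square roots
  have hcc : d + (m + 1) - 1 = d + m := by omega
  rw [hcc]
  have h9 : Real.sqrt (∑ i, T i ^ 2)
      ≤ Real.sqrt ((2 ^ d * (((d + m).choose d : ℕ) : ℝ)) * S ^ 2) := Real.sqrt_le_sqrt key2
  have h10 : Real.sqrt ((2 ^ d * (((d + m).choose d : ℕ) : ℝ)) * S ^ 2)
      = Real.sqrt (2 ^ d) * Real.sqrt (((d + m).choose d : ℕ) : ℝ) * S := by
    rw [Real.sqrt_mul (by positivity), Real.sqrt_sq hS0, Real.sqrt_mul (by positivity)]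
  have h11 : Real.sqrt ((2:ℝ) ^ d) = (2:ℝ) ^ ((d : ℝ) / 2) := by
    rw [← Real.rpow_natCast 2 d, Real.sqrt_eq_rpow, ← Real.rpow_mul (by norm_num : (0:ℝ) ≤ 2)]
    congr 1
    ring
  rw [h10, h11] at h9
  exact h9
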